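/- Let λ > 0, T > 0, η = 1, α = 1, and define y₂(t) = 1 + log(1 + λ²(T−t)²/(2e(λ(T−t) + e))) and y₃(t) = 1 + log(1 + λ³(T−t)³/(3e(λ²(T−t)² + 2e(λ(T−t) + e)))). Then y₃(t) ≤ y₂(t) for all t ∈ [0, T]. -/

import Mathlib

theorem third_cutoff_below_second (lam T : ℝ) (hlam : 0 < lam) (hT : 0 < T)
    (y₂ y₃ : ℝ → ℝ)
    (hy₂ : ∀ t : ℝ, y₂ t = 1 + Real.log (1 +
      lam ^ 2 * (T - t) ^ 2 / (2 * Real.exp 1 * (lam * (T - t) + Real.exp 1))))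
    (hy₃ : ∀ t : ℝ, y₃ t = 1 + Real.log (1 +
      lam ^ 3 * (T - t) ^ 3 / (3 * Real.exp 1 *
        (lam ^ 2 * (T - t) ^ 2 + 2 * Real.exp 1 * (lam * (T - t) + Real.exp 1))))) :
    ∀ t ∈ Set.Icc (0:ℝ) T, y₃ t ≤ y₂ t := by
  intro t ht
  obtain ⟨ht0, htT⟩ := ht
  have e1 : (0:ℝ) < Real.exp 1 := Real.exp_pos 1
  have hs : 0 ≤ lam * (T - t) := by nlinarith
  have hD2 : 0 < 2 * Real.exp 1 * (lam * (T - t) + Real.exp 1) := by nlinarith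
  have hD3 : 0 < 3 * Real.exp 1 * (lam ^ 2 * (T - t) ^ 2 +
      2 * Real.exp 1 * (lam * (T - t) + Real.exp 1)) := by nlinarith [sq_nonneg (lam * (T - t))]
  have hnum3 : 0 ≤ lam ^ 3 * (T - t) ^ 3 := by nlinarith [sq_nonneg (lam * (T - t))]
  have key : lam ^ 3 * (T - t) ^ 3 / (3 * Real.exp 1 *
        (lam ^ 2 * (T - t) ^ 2 + 2 * Real.exp 1 * (lam * (T - t) + Real.exp 1))) ≤
      lam ^ 2 * (T - t) ^ 2 / (2 * Real.exp 1 * (lam * (T - t) + Real.exp 1)) := by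
    rw [div_le_div_iff₀ hD3 hD2]
    nlinarith [sq_nonneg (lam * (T - t)), mul_nonneg hs hs,
      mul_nonneg (mul_nonneg hs hs) hs, mul_nonneg (mul_nonneg (mul_nonneg hs hs) hs) hs,
      mul_nonneg (mul_nonneg hs hs) e1.le,
      mul_nonneg (mul_nonneg (mul_nonneg hs hs) hs) e1.le,
      mul_nonneg (mul_nonneg (mul_nonneg hs hs) e1.le) e1.le]
  rw [hy₂, hy₃]
  have hpos : 0 < 1 + lam ^ 3 * (T - t) ^ 3 / (3 * Real.exp 1 *
      (lam ^ 2 * (T - t) ^ 2 + 2 * Real.exp 1 * (lam * (T - t) + Real.exp 1))) := by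
    have := div_nonneg hnum3 hD3.le
    linarith
  exact add_le_add (le_refl 1) (Real.log_le_log hpos (by linarith))
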